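/- arXiv:2402.16855 — 9 statements merged into one kernel-verified Lean document; each statement's English description precedes it below -/
import Mathlib

section
/- Let n ≥ 1, let p, r, a ∈ ℝⁿ with pᵢ ≥ 0 and rᵢ > 0 for all i, let α, β > 0 with α + β = 1, and let q belong to the feasible set C = {q ∈ ℝⁿ : Σᵢ qᵢ = 1 and 0 ≤ qᵢ ≤ aᵢ for all i}. Suppose there are indices i ≠ j such that pᵢ = 0, qᵢ > 0, pⱼ > 0, and qⱼ + qᵢ ≤ aⱼ. Define q' by q'ᵢ = 0, q'ⱼ = qⱼ + qᵢ, and q'ₖ = qₖ for all k ∉ {i, j}. Then q' ∈ C and f(q') < f(q), where f(q) = −Σₖ pₖ · log(α·qₖ + β·rₖ). In particular, such a q is not a minimizer of f on C. -/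
/-- Mass on a zero-weight coordinate can be moved to a positive-weight
coordinate, strictly decreasing the objective; hence such q is not a minimizer. -/
theorem shift_mass_strict_decrease (n : ℕ) (hn : 1 ≤ n) (p r a : Fin n → ℝ)
    (hp : ∀ k, 0 ≤ p k) (hr : ∀ k, 0 < r k)
    (α β : ℝ) (hα : 0 < α) (hβ : 0 < β) (hαβ : α + β = 1)
    (f : (Fin n → ℝ) → ℝ)
    (hf : f = fun q : Fin n → ℝ => -∑ k, p k * Real.log (α * q k + β * r k))
    (C : Set (Fin n → ℝ))
    (hC : C = {q : Fin n → ℝ | ∑ k, q k = 1 ∧ ∀ k, 0 ≤ q k ∧ q k ≤ a k})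
    (q : Fin n → ℝ) (hqC : q ∈ C)
    (i j : Fin n) (hij : i ≠ j)
    (hpi : p i = 0) (hqi : 0 < q i) (hpj : 0 < p j) (hbound : q j + q i ≤ a j)
    (q' : Fin n → ℝ)
    (hq' : q' = fun k => if k = i then 0 else if k = j then q j + q i else q k) :
    q' ∈ C ∧ f q' < f q ∧ ¬ (∀ w ∈ C, f q ≤ f w) := by
  subst hf hC hq'
  obtain ⟨hsum, hbd⟩ := hqC
  have hj : j ≠ i := fun h => hij h.symm
  have hform : ∀ k, (if k = i then (0:ℝ) else if k = j then q j + q i else q k)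
      = q k + (if k = j then q i else 0) - (if k = i then q i else 0) := by
    intro k
    by_cases hk : k = i
    · subst hk; simp [hij, hj]
    · by_cases hk2 : k = j <;> simp [hk, hk2, hj]
  have hsum' : ∑ k, (if k = i then (0:ℝ) else if k = j then q j + q i else q k) = 1 := by
    simp only [hform]
    rw [Finset.sum_sub_distrib, Finset.sum_add_distrib]
    simp [Finset.sum_ite_eq', hsum]
  have hmem : (fun k => if k = i then (0:ℝ) else if k = j then q j + q i else q k) ∈
      {q : Fin n → ℝ | ∑ k, q k = 1 ∧ ∀ k, 0 ≤ q k ∧ q k ≤ a k} := by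
    refine ⟨hsum', fun k => ?_⟩
    by_cases hk : k = i
    · subst hk
      simp only [if_pos rfl]
      exact ⟨le_refl 0, (hbd k).1.trans (hbd k).2⟩
    · by_cases hk2 : k = j
      · subst hk2
        simp only [if_neg hk, if_pos rfl]
        exact ⟨add_nonneg (hbd k).1 hqi.le, hbound⟩
      · simp only [if_neg hk, if_neg hk2]
        exact hbd k
  have hlt : (fun q : Fin n → ℝ => -∑ k, p k * Real.log (α * q k + β * r k))
      (fun k => if k = i then (0:ℝ) else if k = j then q j + q i else q k)
      < (fun q : Fin n → ℝ => -∑ k, p k * Real.log (α * q k + β * r k)) q := by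
    simp only [neg_lt_neg_iff]
    apply Finset.sum_lt_sum
    · intro k _
      by_cases hk : k = i
      · subst hk; simp [hpi]
      · by_cases hk2 : k = j
        · subst hk2
          rw [if_neg hk, if_pos rfl]
          apply mul_le_mul_of_nonneg_left _ (hp k)
          apply Real.log_le_log
          · nlinarith [mul_nonneg hα.le (hbd k).1, mul_pos hβ (hr k)]
          · nlinarith [mul_pos hα hqi]
        · simp [hk, hk2]
    · refine ⟨j, Finset.mem_univ j, ?_⟩
      rw [if_neg hj, if_pos rfl]
      apply mul_lt_mul_of_pos_left _ hpj
      apply Real.log_lt_log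
      · nlinarith [mul_nonneg hα.le (hbd j).1, mul_pos hβ (hr j)]
      · nlinarith [mul_pos hα hqi]
  exact ⟨hmem, hlt, fun h => absurd (h _ hmem) (not_le.2 hlt)⟩
end

section
/- Let n ≥ 1, let p, r, a ∈ ℝⁿ with pᵢ ≥ 0, rᵢ > 0, and aᵢ ≥ 0 for all i, and let α, β > 0 with α + β = 1. Suppose μ* > 0 satisfies Σᵢ min(max(μ*·pᵢ − β·rᵢ/α, 0), aᵢ) = 1. Define q* ∈ ℝⁿ by q*ᵢ = min(max(μ*·pᵢ − β·rᵢ/α, 0), aᵢ). Then q* belongs to the feasible set C = {q ∈ ℝⁿ : Σᵢ qᵢ = 1 and 0 ≤ qᵢ ≤ aᵢ for all i}, and f(q*) ≤ f(q) for every q ∈ C, where f(q) = −Σᵢ pᵢ · log(α·qᵢ + β·rᵢ); that is, q* is a global minimizer of f on C. -/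
/-- The water-filling formula q*ᵢ = min(max(μ*·pᵢ − β·rᵢ/α, 0), aᵢ)
with ∑ q*ᵢ = 1 gives a global minimizer of f on the feasible set C. -/
theorem waterfilling_is_minimizer (n : ℕ) (hn : 1 ≤ n) (p r a : Fin n → ℝ)
    (hp : ∀ i, 0 ≤ p i) (hr : ∀ i, 0 < r i) (ha : ∀ i, 0 ≤ a i)
    (α β : ℝ) (hα : 0 < α) (hβ : 0 < β) (hαβ : α + β = 1)
    (μ : ℝ) (hμ : 0 < μ)
    (hroot : ∑ i, min (max (μ * p i - β * r i / α) 0) (a i) = 1)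
    (f : (Fin n → ℝ) → ℝ)
    (hf : f = fun w : Fin n → ℝ => -∑ i, p i * Real.log (α * w i + β * r i))
    (C : Set (Fin n → ℝ))
    (hC : C = {w : Fin n → ℝ | ∑ i, w i = 1 ∧ ∀ i, 0 ≤ w i ∧ w i ≤ a i})
    (q : Fin n → ℝ)
    (hq : q = fun i => min (max (μ * p i - β * r i / α) 0) (a i)) :
    q ∈ C ∧ ∀ w ∈ C, f q ≤ f w := by
  have hqi : ∀ i, q i = min (max (μ * p i - β * r i / α) 0) (a i) := by
    intro i; rw [hq]
  have hq0 : ∀ i, 0 ≤ q i := by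
    intro i; rw [hqi]; exact le_min (le_max_right _ _) (ha i)
  have hqa : ∀ i, q i ≤ a i := by
    intro i; rw [hqi]; exact min_le_right _ _
  have hqsum : ∑ i, q i = 1 := by
    rw [show (∑ i, q i) = ∑ i, min (max (μ * p i - β * r i / α) 0) (a i) from
      Finset.sum_congr rfl fun i _ => hqi i]
    exact hroot
  have hmem : q ∈ C := by rw [hC]; exact ⟨hqsum, fun i => ⟨hq0 i, hqa i⟩⟩
  refine ⟨hmem, ?_⟩
  intro w hw
  rw [hC] at hw
  obtain ⟨hwsum, hwb⟩ := hw
  have hsq : ∀ i, 0 < α * q i + β * r i := fun i =>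
    add_pos_of_nonneg_of_pos (mul_nonneg hα.le (hq0 i)) (mul_pos hβ (hr i))
  have hsw : ∀ i, 0 < α * w i + β * r i := fun i =>
    add_pos_of_nonneg_of_pos (mul_nonneg hα.le (hwb i).1) (mul_pos hβ (hr i))
  have key : ∀ i, p i * (Real.log (α * w i + β * r i) - Real.log (α * q i + β * r i))
      ≤ (1 / μ) * (w i - q i) := by
    intro i
    have hlog : Real.log (α * w i + β * r i) - Real.log (α * q i + β * r i)
        ≤ (α * w i - α * q i) / (α * q i + β * r i) := by
      rw [← Real.log_div (hsw i).ne' (hsq i).ne']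
      have h1 := Real.log_le_sub_one_of_pos (div_pos (hsw i) (hsq i))
      have h2 : (α * w i + β * r i) / (α * q i + β * r i) - 1
          = (α * w i - α * q i) / (α * q i + β * r i) := by
        rw [div_sub_one (hsq i).ne']; ring_nf
      linarith [h1, h2.le, h2.ge]
    have step1 : p i * (Real.log (α * w i + β * r i) - Real.log (α * q i + β * r i))
        ≤ p i * ((α * w i - α * q i) / (α * q i + β * r i)) :=
      mul_le_mul_of_nonneg_left hlog (hp i)
    have step2 : p i * ((α * w i - α * q i) / (α * q i + β * r i))
        ≤ (1 / μ) * (w i - q i) := by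
      rw [one_div_mul_eq_div, mul_div_assoc', div_le_div_iff₀ (hsq i) hμ]
      -- goal : p i * (α * w i - α * q i) * μ ≤ (w i - q i) * (α * q i + β * r i)
      have hfa : α * (β * r i / α) = β * r i := by field_simp
      rcases le_or_gt (μ * p i - β * r i / α) 0 with ht | ht
      · have hqv : q i = 0 := by
          rw [hqi, max_eq_right ht, min_eq_left (ha i)]
        have h1 : α * (μ * p i) ≤ α * (β * r i / α) :=
          mul_le_mul_of_nonneg_left (by linarith) hα.le
        rw [hfa] at h1
        rw [hqv]
        nlinarith [mul_nonneg (hwb i).1 (by linarith : (0:ℝ) ≤ β * r i - α * (μ * p i))]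
      · rcases le_or_gt (μ * p i - β * r i / α) (a i) with hta | hta
        · have hqv : q i = μ * p i - β * r i / α := by
            rw [hqi, max_eq_left ht.le, min_eq_left hta]
          have hs : α * q i + β * r i = α * μ * p i := by
            rw [hqv]; field_simp; ring
          rw [hs, hqv]
          nlinarith [hfa]
        · have hqv : q i = a i := by
            rw [hqi, min_eq_right]
            exact le_max_of_le_left hta.le
          have h1 : α * (a i) < α * (μ * p i - β * r i / α) :=
            mul_lt_mul_of_pos_left hta hα
          have h2 : α * a i + β * r i ≤ α * μ * p i := by nlinarith [hfa]
          rw [hqv]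
          nlinarith [mul_nonneg (by linarith [(hwb i).2] : (0:ℝ) ≤ a i - w i)
            (by linarith : (0:ℝ) ≤ α * μ * p i - (α * a i + β * r i))]
    linarith
  have hsum := Finset.sum_le_sum (fun i (_ : i ∈ Finset.univ) => key i)
  have hrhs : ∑ i, (1 / μ) * (w i - q i) = 0 := by
    rw [← Finset.mul_sum, Finset.sum_sub_distrib, hwsum, hqsum]; ring
  have hlhs : ∑ i, p i * (Real.log (α * w i + β * r i) - Real.log (α * q i + β * r i))
      = (∑ i, p i * Real.log (α * w i + β * r i))
        - ∑ i, p i * Real.log (α * q i + β * r i) := by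
    rw [← Finset.sum_sub_distrib]
    exact Finset.sum_congr rfl fun i _ => by ring
  rw [hf]
  simp only
  rw [hrhs, hlhs] at hsum
  linarith
end

section
/- Let α, β > 0 with α + β = 1, and suppose (q, λ, π, ν) ∈ ℝⁿ × ℝⁿ × ℝⁿ × ℝ satisfies the KKT system for the problem data p, r, a ∈ ℝⁿ (rᵢ > 0, 0 ≤ aᵢ for all i) with ν > 0. If an index i satisfies pᵢ ≥ ((α·aᵢ + β·rᵢ)/α)·ν, then qᵢ = aᵢ. -/
/-- In the KKT system with ν > 0, if pᵢ ≥ ((α·aᵢ + β·rᵢ)/α)·ν then qᵢ = aᵢ. -/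
theorem kkt_upper_case (n : ℕ) (hn : 1 ≤ n) (p r a : Fin n → ℝ)
    (hr : ∀ i, 0 < r i) (ha : ∀ i, 0 ≤ a i)
    (α β : ℝ) (hα : 0 < α) (hβ : 0 < β) (hαβ : α + β = 1)
    (q lam pi : Fin n → ℝ) (ν : ℝ)
    (hstat : ∀ i, -(α * p i) / (α * q i + β * r i) - lam i + pi i + ν = 0)
    (hcs1 : ∀ i, lam i * q i = 0)
    (hcs2 : ∀ i, pi i * (q i - a i) = 0)
    (hlam : ∀ i, 0 ≤ lam i) (hpi : ∀ i, 0 ≤ pi i)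
    (hfeas : ∀ i, 0 ≤ q i ∧ q i ≤ a i)
    (hsum : ∑ i, q i = 1)
    (hν : 0 < ν)
    (i : Fin n) (hi : ((α * a i + β * r i) / α) * ν ≤ p i) :
    q i = a i := by
  by_contra hne
  have hq := hfeas i
  have hlt : q i < a i := lt_of_le_of_ne hq.2 hne
  have hpi0 : pi i = 0 := by
    rcases mul_eq_zero.mp (hcs2 i) with h | h
    · exact h
    · exact absurd (sub_eq_zero.mp h) hne
  have hden : 0 < α * q i + β * r i := by
    have := hr i
    nlinarith [hq.1]
  have hst := hstat i
  rw [hpi0] at hst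
  have hfrac : α * p i / (α * q i + β * r i) = ν - lam i := by
    field_simp at hst ⊢; linarith
  have h1 : α * p i = (ν - lam i) * (α * q i + β * r i) := by
    field_simp at hfrac; linarith [hfrac]
  have h2 : ν * (α * a i + β * r i) ≤ α * p i := by
    have : (α * a i + β * r i) / α * ν * α = ν * (α * a i + β * r i) := by
      field_simp
    nlinarith [mul_le_mul_of_nonneg_right hi hα.le]
  nlinarith [mul_nonneg (hlam i) hden.le, mul_pos hν (by nlinarith [hlt] : (0:ℝ) < α * a i - α * q i)]
end

section
/- Let α, β > 0 with α + β = 1, and suppose (q, λ, π, ν) ∈ ℝⁿ × ℝⁿ × ℝⁿ × ℝ satisfies the KKT system for the problem data p, r, a ∈ ℝⁿ (rᵢ > 0, 0 ≤ aᵢ for all i) with ν > 0. If an index i satisfies (β·rᵢ/α)·ν < pᵢ < ((α·aᵢ + β·rᵢ)/α)·ν, then qᵢ = pᵢ/ν − β·rᵢ/α. -/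
/-- In the KKT system with ν > 0, if (β·rᵢ/α)·ν < pᵢ < ((α·aᵢ + β·rᵢ)/α)·ν
then qᵢ = pᵢ/ν − β·rᵢ/α. -/
theorem kkt_interior_case (n : ℕ) (hn : 1 ≤ n) (p r a : Fin n → ℝ)
    (hr : ∀ i, 0 < r i) (ha : ∀ i, 0 ≤ a i)
    (α β : ℝ) (hα : 0 < α) (hβ : 0 < β) (hαβ : α + β = 1)
    (q lam pi : Fin n → ℝ) (ν : ℝ)
    (hstat : ∀ i, -(α * p i) / (α * q i + β * r i) - lam i + pi i + ν = 0)
    (hcs1 : ∀ i, lam i * q i = 0)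
    (hcs2 : ∀ i, pi i * (q i - a i) = 0)
    (hlam : ∀ i, 0 ≤ lam i) (hpi : ∀ i, 0 ≤ pi i)
    (hfeas : ∀ i, 0 ≤ q i ∧ q i ≤ a i)
    (hsum : ∑ i, q i = 1)
    (hν : 0 < ν)
    (i : Fin n) (hi1 : (β * r i / α) * ν < p i)
    (hi2 : p i < ((α * a i + β * r i) / α) * ν) :
    q i = p i / ν - β * r i / α := by
  have hri := hr i
  have hq0 := (hfeas i).1
  have hqa := (hfeas i).2
  -- a i > 0
  have hai : 0 < a i := by
    by_contra h
    push_neg at h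
    have hai0 : a i = 0 := le_antisymm h (ha i)
    rw [hai0] at hi2
    have : (β * r i / α) * ν < (β * r i / α) * ν := by
      calc (β * r i / α) * ν < p i := hi1
        _ < ((α * 0 + β * r i) / α) * ν := hi2
        _ = (β * r i / α) * ν := by ring
    exact lt_irrefl _ this
  -- key inequalities on α p i
  have hαp1 : β * r i * ν < α * p i := by
    have := mul_lt_mul_of_pos_left hi1 hα
    calc β * r i * ν = α * ((β * r i / α) * ν) := by field_simp
      _ < α * p i := this
  have hαp2 : α * p i < (α * a i + β * r i) * ν := by
    have := mul_lt_mul_of_pos_left hi2 hα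
    calc α * p i < α * (((α * a i + β * r i) / α) * ν) := this
      _ = (α * a i + β * r i) * ν := by field_simp
  -- q i > 0
  have hqpos : 0 < q i := by
    rcases lt_or_eq_of_le hq0 with h | h
    · exact h
    · exfalso
      have hpi0 : pi i = 0 := by
        have := hcs2 i
        rw [← h] at this
        simp at this
        rcases this with h1 | h1
        · exact h1
        · exact absurd h1.symm (ne_of_lt hai)
      have hst := hstat i
      rw [← h, hpi0] at hst
      have hd : α * 0 + β * r i = β * r i := by ring
      rw [hd] at hst
      have hbr : (0:ℝ) < β * r i := by positivity
      -- -(α p i)/(β r i) - lam i + 0 + ν = 0  →  α p i = (ν - lam i)(β r i) ≤ ν β r i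
      have : α * p i = (ν - lam i) * (β * r i) := by
        field_simp at hst ⊢
        linarith
      have hle : α * p i ≤ ν * (β * r i) := by
        rw [this]
        have := hlam i
        nlinarith
      nlinarith
  -- q i < a i
  have hqlt : q i < a i := by
    rcases lt_or_eq_of_le hqa with h | h
    · exact h
    · exfalso
      have hlam0 : lam i = 0 := by
        have := hcs1 i
        rcases mul_eq_zero.mp this with h1 | h1
        · exact h1
        · exact absurd h1 (ne_of_gt hqpos)
      have hst := hstat i
      rw [h, hlam0] at hst
      have hd : (0:ℝ) < α * a i + β * r i := by positivity
      have : α * p i = (ν + pi i) * (α * a i + β * r i) := by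
        field_simp at hst ⊢
        linarith
      have := hpi i
      nlinarith
  -- interior: lam i = 0, pi i = 0
  have hlam0 : lam i = 0 := by
    rcases mul_eq_zero.mp (hcs1 i) with h1 | h1
    · exact h1
    · exact absurd h1 (ne_of_gt hqpos)
  have hpi0 : pi i = 0 := by
    rcases mul_eq_zero.mp (hcs2 i) with h1 | h1
    · exact h1
    · exact absurd h1 (sub_ne_zero_of_ne (ne_of_lt hqlt))
  have hst := hstat i
  rw [hlam0, hpi0] at hst
  have hd : (0:ℝ) < α * q i + β * r i := by positivity
  have hkey : α * p i = ν * (α * q i + β * r i) := by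
    field_simp at hst
    linarith
  field_simp
  nlinarith [hkey]
end

section
/- Let n ≥ 1, let α, β > 0 with α + β = 1, and suppose (q, λ, π, ν) ∈ ℝⁿ × ℝⁿ × ℝⁿ × ℝ satisfies the KKT system for the problem data p, r, a ∈ ℝⁿ, where pᵢ > 0 and rᵢ > 0 for all i and Σᵢ aᵢ > 1. Then ν > 0. -/
/-- In the KKT system with pᵢ > 0 for all i and ∑ aᵢ > 1, the equality
multiplier ν is positive. -/
theorem kkt_nu_pos (n : ℕ) (hn : 1 ≤ n) (p r a : Fin n → ℝ)
    (hp : ∀ i, 0 < p i) (hr : ∀ i, 0 < r i) (ha : ∀ i, 0 ≤ a i)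
    (hasum : 1 < ∑ i, a i)
    (α β : ℝ) (hα : 0 < α) (hβ : 0 < β) (hαβ : α + β = 1)
    (q lam pi : Fin n → ℝ) (ν : ℝ)
    (hstat : ∀ i, -(α * p i) / (α * q i + β * r i) - lam i + pi i + ν = 0)
    (hcs1 : ∀ i, lam i * q i = 0)
    (hcs2 : ∀ i, pi i * (q i - a i) = 0)
    (hlam : ∀ i, 0 ≤ lam i) (hpi : ∀ i, 0 ≤ pi i)
    (hfeas : ∀ i, 0 ≤ q i ∧ q i ≤ a i)
    (hsum : ∑ i, q i = 1) :
    0 < ν := by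
  -- there is an index with q i < a i
  obtain ⟨i, hi⟩ : ∃ i, q i < a i := by
    by_contra h
    push_neg at h
    have : ∑ i, a i ≤ ∑ i, q i := Finset.sum_le_sum fun i _ => h i
    linarith [hsum ▸ this]
  have hpi0 : pi i = 0 := by
    have := hcs2 i
    rcases mul_eq_zero.mp this with h | h
    · exact h
    · linarith
  have hden : 0 < α * q i + β * r i := by
    have := (hfeas i).1
    nlinarith [hr i]
  have hfrac : 0 < α * p i / (α * q i + β * r i) :=
    div_pos (mul_pos hα (hp i)) hden
  have := hstat i
  rw [neg_div] at this
  linarith [hlam i]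
end

section
/- Let n ≥ 1, let p, r, a ∈ ℝⁿ with pᵢ ≥ 0, rᵢ > 0, and aᵢ ≥ 0 for all i, let α, β > 0, and let μ ∈ ℝ be such that Σ_{i ∈ N_c(μ)} pᵢ > 0, where N_c(μ) = {i : 0 < μ·pᵢ − β·rᵢ/α < aᵢ}. Then the Newton update T(μ) = (1 + Σ_{i ∈ N_c(μ)} β·rᵢ/α − Σ_{i ∈ N_u(μ)} aᵢ) / (Σ_{i ∈ N_c(μ)} pᵢ), with N_u(μ) = {i : μ·pᵢ − β·rᵢ/α ≥ aᵢ}, satisfies: T(μ) = μ if and only if Q(μ) = 1, where Q(μ) = Σᵢ min(max(μ·pᵢ − β·rᵢ/α, 0), aᵢ). -/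
open Finset in
/-- The Newton update T satisfies T(μ) = μ ↔ Q(μ) = 1. -/
theorem newton_fixed_iff (n : ℕ) (hn : 1 ≤ n) (p r a : Fin n → ℝ)
    (hp : ∀ i, 0 ≤ p i) (hr : ∀ i, 0 < r i) (ha : ∀ i, 0 ≤ a i)
    (α β : ℝ) (hα : 0 < α) (hβ : 0 < β)
    (Q : ℝ → ℝ)
    (hQ : Q = fun μ => ∑ i, min (max (μ * p i - β * r i / α) 0) (a i))
    (Nc Nu : ℝ → Finset (Fin n))
    (hNc : ∀ μ, Nc μ = {i | 0 < μ * p i - β * r i / α ∧ μ * p i - β * r i / α < a i})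
    (hNu : ∀ μ, Nu μ = {i | a i ≤ μ * p i - β * r i / α})
    (T : ℝ → ℝ)
    (hT : T = fun μ =>
      (1 + ∑ i ∈ Nc μ, β * r i / α - ∑ i ∈ Nu μ, a i) / ∑ i ∈ Nc μ, p i)
    (μ : ℝ) (hden : 0 < ∑ i ∈ Nc μ, p i) :
    T μ = μ ↔ Q μ = 1 := by
  have hne : (∑ i ∈ Nc μ, p i) ≠ 0 := ne_of_gt hden
  have key : ∀ i, min (max (μ * p i - β * r i / α) 0) (a i)
      = (if i ∈ Nc μ then μ * p i - β * r i / α else 0)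
        + (if i ∈ Nu μ then a i else 0) := by
    intro i
    have hc : i ∈ Nc μ ↔ (0 < μ * p i - β * r i / α ∧ μ * p i - β * r i / α < a i) := by
      rw [← Finset.mem_coe, hNc]; simp
    have hu : i ∈ Nu μ ↔ a i ≤ μ * p i - β * r i / α := by
      rw [← Finset.mem_coe, hNu]; simp
    simp only [hc, hu]
    by_cases h1 : 0 < μ * p i - β * r i / α
    · by_cases h2 : μ * p i - β * r i / α < a i
      · rw [if_pos (⟨h1, h2⟩ : _ ∧ _), if_neg (by linarith), max_eq_left h1.le,
          min_eq_left h2.le]; ring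
      · rw [if_neg (by tauto), if_pos (by linarith), max_eq_left h1.le,
          min_eq_right (by linarith)]; ring
    · rw [if_neg (by tauto), max_eq_right (le_of_not_gt h1), min_eq_left (ha i)]
      by_cases h2 : a i ≤ μ * p i - β * r i / α
      · rw [if_pos h2]
        have : a i = 0 := le_antisymm (by linarith [le_of_not_gt h1]) (ha i)
        linarith
      · rw [if_neg h2]; ring
  have hsum : (∑ i, min (max (μ * p i - β * r i / α) 0) (a i))
      = (∑ i ∈ Nc μ, (μ * p i - β * r i / α)) + ∑ i ∈ Nu μ, a i := by
    rw [Finset.sum_congr rfl fun i _ => key i, Finset.sum_add_distrib,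
      Finset.sum_ite_mem, Finset.sum_ite_mem, Finset.univ_inter, Finset.univ_inter]
  have hsplit : (∑ i ∈ Nc μ, (μ * p i - β * r i / α))
      = μ * (∑ i ∈ Nc μ, p i) - ∑ i ∈ Nc μ, β * r i / α := by
    rw [Finset.sum_sub_distrib, Finset.mul_sum]
  rw [hT, hQ]
  simp only [div_eq_iff hne, hsum, hsplit]
  constructor <;> intro h <;> linarith
end

section
/- Let n ≥ 1, let p, r, a ∈ ℝⁿ with pᵢ ≥ 0, rᵢ > 0, and aᵢ ≥ 0 for all i, let α, β > 0, and let μ ∈ ℝ be such that Σ_{i ∈ N_c(μ)} pᵢ > 0, where N_c(μ) = {i : 0 < μ·pᵢ − β·rᵢ/α < aᵢ}. Then T(μ) > μ if and only if Q(μ) < 1, where T is the Newton update and Q(μ) = Σᵢ min(max(μ·pᵢ − β·rᵢ/α, 0), aᵢ). -/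
open Finset in
/-- The Newton update T satisfies T(μ) > μ ↔ Q(μ) < 1. -/
theorem newton_increase_iff (n : ℕ) (hn : 1 ≤ n) (p r a : Fin n → ℝ)
    (hp : ∀ i, 0 ≤ p i) (hr : ∀ i, 0 < r i) (ha : ∀ i, 0 ≤ a i)
    (α β : ℝ) (hα : 0 < α) (hβ : 0 < β)
    (Q : ℝ → ℝ)
    (hQ : Q = fun μ => ∑ i, min (max (μ * p i - β * r i / α) 0) (a i))
    (Nc Nu : ℝ → Finset (Fin n))
    (hNc : ∀ μ, Nc μ = {i | 0 < μ * p i - β * r i / α ∧ μ * p i - β * r i / α < a i})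
    (hNu : ∀ μ, Nu μ = {i | a i ≤ μ * p i - β * r i / α})
    (T : ℝ → ℝ)
    (hT : T = fun μ =>
      (1 + ∑ i ∈ Nc μ, β * r i / α - ∑ i ∈ Nu μ, a i) / ∑ i ∈ Nc μ, p i)
    (μ : ℝ) (hden : 0 < ∑ i ∈ Nc μ, p i) :
    μ < T μ ↔ Q μ < 1 := by
  have hQval : Q μ = ∑ i ∈ Nc μ, (μ * p i - β * r i / α) + ∑ i ∈ Nu μ, a i := by
    have hterm : ∀ i : Fin n, min (max (μ * p i - β * r i / α) 0) (a i)
        = (if i ∈ Nc μ then (μ * p i - β * r i / α) else 0)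
          + (if i ∈ Nu μ then a i else 0) := by
      intro i
      have hmc : i ∈ Nc μ ↔ (0 < μ * p i - β * r i / α ∧ μ * p i - β * r i / α < a i) := by
        rw [← Finset.mem_coe, hNc]; simp
      have hmu : i ∈ Nu μ ↔ a i ≤ μ * p i - β * r i / α := by
        rw [← Finset.mem_coe, hNu]; simp
      simp only [hmc, hmu]
      by_cases h1 : a i ≤ μ * p i - β * r i / α
      · have h0 : 0 ≤ μ * p i - β * r i / α := le_trans (ha i) h1
        rw [max_eq_left h0, min_eq_right h1]
        simp [h1, not_lt.mpr h1]
      · push_neg at h1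
        by_cases h2 : 0 < μ * p i - β * r i / α
        · rw [max_eq_left h2.le, min_eq_left h1.le]
          simp [h1, h2, not_le.mpr h1]
        · push_neg at h2
          rw [max_eq_right h2, min_eq_left (ha i)]
          split_ifs with hA hB hB
          all_goals first
            | exact absurd hA.1 (not_lt.mpr h2)
            | linarith
    rw [hQ]
    simp only [hterm, Finset.sum_add_distrib, Finset.sum_ite_mem,
      Finset.univ_inter]
  rw [hT]
  simp only
  rw [lt_div_iff₀ hden, hQval]
  constructor <;> intro h <;> nlinarith [Finset.sum_sub_distrib (s := Nc μ)
    (f := fun i => μ * p i) (g := fun i => β * r i / α),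
    Finset.mul_sum (Nc μ) p μ]
end

section
/- Let n ≥ 1, let p, r, a ∈ ℝⁿ with pᵢ ≥ 0, rᵢ > 0, and aᵢ ≥ 0 for all i, let α, β > 0, and let μ ∈ ℝ be such that Σ_{i ∈ N_c(μ)} pᵢ > 0, where N_c(μ) = {i : 0 < μ·pᵢ − β·rᵢ/α < aᵢ}. Then T(μ) < μ if and only if Q(μ) > 1, where T is the Newton update and Q(μ) = Σᵢ min(max(μ·pᵢ − β·rᵢ/α, 0), aᵢ). -/
open Finset in
/-- The Newton update T satisfies T(μ) < μ ↔ Q(μ) > 1. -/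
theorem newton_decrease_iff (n : ℕ) (hn : 1 ≤ n) (p r a : Fin n → ℝ)
    (hp : ∀ i, 0 ≤ p i) (hr : ∀ i, 0 < r i) (ha : ∀ i, 0 ≤ a i)
    (α β : ℝ) (hα : 0 < α) (hβ : 0 < β)
    (Q : ℝ → ℝ)
    (hQ : Q = fun μ => ∑ i, min (max (μ * p i - β * r i / α) 0) (a i))
    (Nc Nu : ℝ → Finset (Fin n))
    (hNc : ∀ μ, Nc μ = {i | 0 < μ * p i - β * r i / α ∧ μ * p i - β * r i / α < a i})
    (hNu : ∀ μ, Nu μ = {i | a i ≤ μ * p i - β * r i / α})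
    (T : ℝ → ℝ)
    (hT : T = fun μ =>
      (1 + ∑ i ∈ Nc μ, β * r i / α - ∑ i ∈ Nu μ, a i) / ∑ i ∈ Nc μ, p i)
    (μ : ℝ) (hden : 0 < ∑ i ∈ Nc μ, p i) :
    T μ < μ ↔ 1 < Q μ := by
  set x : Fin n → ℝ := fun i => μ * p i - β * r i / α with hx
  have hmemc : ∀ i, i ∈ Nc μ ↔ (0 < x i ∧ x i < a i) := by
    intro i
    constructor <;> intro hi
    · have : i ∈ ({i | 0 < μ * p i - β * r i / α ∧ μ * p i - β * r i / α < a i} : Set _) := by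
        rw [← hNc μ]; exact hi
      simpa [hx] using this
    · have : i ∈ ({i | 0 < μ * p i - β * r i / α ∧ μ * p i - β * r i / α < a i} : Set _) := by
        simpa [hx] using hi
      rw [← hNc μ] at this; exact this
  have hmemu : ∀ i, i ∈ Nu μ ↔ a i ≤ x i := by
    intro i
    constructor <;> intro hi
    · have : i ∈ ({i | a i ≤ μ * p i - β * r i / α} : Set _) := by
        rw [← hNu μ]; exact hi
      simpa [hx] using this
    · have : i ∈ ({i | a i ≤ μ * p i - β * r i / α} : Set _) := by
        simpa [hx] using hi
      rw [← hNu μ] at this; exact this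
  have hdisj : Disjoint (Nc μ) (Nu μ) := by
    rw [Finset.disjoint_left]
    intro i hi hu
    rw [hmemc] at hi; rw [hmemu] at hu
    linarith [hi.2]
  have key : Q μ = ∑ i ∈ Nc μ, x i + ∑ i ∈ Nu μ, a i := by
    rw [hQ]
    dsimp only
    have h1 : ∑ i, min (max (x i) 0) (a i)
        = ∑ i ∈ Nc μ ∪ Nu μ, min (max (x i) 0) (a i) := by
      refine (Finset.sum_subset (Finset.subset_univ _) ?_).symm
      intro i _ hi
      rw [Finset.mem_union, hmemc, hmemu] at hi
      push_neg at hi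
      have h2 : x i ≤ 0 := by
        rcases lt_or_ge 0 (x i) with h | h
        · have := hi.1 h; linarith [hi.2]
        · exact h
      simp [max_eq_right h2, min_eq_left (ha i)]
    rw [h1, Finset.sum_union hdisj]
    congr 1
    · refine Finset.sum_congr rfl fun i hi => ?_
      rw [hmemc] at hi
      rw [max_eq_left hi.1.le, min_eq_left hi.2.le]
    · refine Finset.sum_congr rfl fun i hi => ?_
      rw [hmemu] at hi
      have h0 : 0 ≤ x i := le_trans (ha i) hi
      rw [max_eq_left h0, min_eq_right hi]
  have hsum : ∑ i ∈ Nc μ, x i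
      = μ * (∑ i ∈ Nc μ, p i) - ∑ i ∈ Nc μ, β * r i / α := by
    rw [Finset.mul_sum, ← Finset.sum_sub_distrib]
  rw [hT]
  simp only
  rw [div_lt_iff₀ hden, key, hsum]
  constructor <;> intro h <;> linarith
end

section
/- (Lemma on Newton's method) Let n ≥ 1, let p, r, a ∈ ℝⁿ with pᵢ ≥ 0, rᵢ > 0, and aᵢ ≥ 0 for all i, and let α, β > 0. Suppose μ* > 0 is the unique positive root of the equation Q(μ) = 1, i.e. Q(μ*) = 1 and Q(μ) ≠ 1 for every μ > 0 with μ ≠ μ*. Let μ > 0 be any point at which the Newton update T(μ) is defined, i.e. Σ_{i ∈ N_c(μ)} pᵢ > 0. Then μ < T(μ) if and only if μ < μ*, and T(μ) < μ if and only if μ > μ*. Consequently, in Newton's method producing iterates μ^(τ+1) = T(μ^(τ)), one has μ^(τ) < μ^(τ+1) if and only if μ^(τ) < μ*, and μ^(τ) > μ^(τ+1) if and only if μ^(τ) > μ*. -/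
open Finset in
/-- Lemma on Newton's method: with μ* the unique positive root of
Q(μ) = 1, and μ > 0 where T is defined: μ < T(μ) ↔ μ < μ* and T(μ) < μ ↔ μ > μ*. -/
theorem newton_bracketing (n : ℕ) (hn : 1 ≤ n) (p r a : Fin n → ℝ)
    (hp : ∀ i, 0 ≤ p i) (hr : ∀ i, 0 < r i) (ha : ∀ i, 0 ≤ a i)
    (α β : ℝ) (hα : 0 < α) (hβ : 0 < β)
    (Q : ℝ → ℝ)
    (hQ : Q = fun μ => ∑ i, min (max (μ * p i - β * r i / α) 0) (a i))
    (Nc Nu : ℝ → Finset (Fin n))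
    (hNc : ∀ μ, Nc μ = {i | 0 < μ * p i - β * r i / α ∧ μ * p i - β * r i / α < a i})
    (hNu : ∀ μ, Nu μ = {i | a i ≤ μ * p i - β * r i / α})
    (T : ℝ → ℝ)
    (hT : T = fun μ =>
      (1 + ∑ i ∈ Nc μ, β * r i / α - ∑ i ∈ Nu μ, a i) / ∑ i ∈ Nc μ, p i)
    (μs : ℝ) (hμs : 0 < μs) (hroot : Q μs = 1)
    (huniq : ∀ μ : ℝ, 0 < μ → μ ≠ μs → Q μ ≠ 1)
    (μ : ℝ) (hμ : 0 < μ) (hden : 0 < ∑ i ∈ Nc μ, p i) :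
    (μ < T μ ↔ μ < μs) ∧ (T μ < μ ↔ μs < μ) := by
  have hNc' : ∀ ν i, i ∈ Nc ν ↔
      (0 < ν * p i - β * r i / α ∧ ν * p i - β * r i / α < a i) := by
    intro ν i
    rw [← Finset.mem_coe, hNc ν, Set.mem_setOf_eq]
  have hNu' : ∀ ν i, i ∈ Nu ν ↔ a i ≤ ν * p i - β * r i / α := by
    intro ν i
    rw [← Finset.mem_coe, hNu ν, Set.mem_setOf_eq]
  -- Q is monotone
  have hmono : ∀ x y : ℝ, x ≤ y → Q x ≤ Q y := by
    intro x y hxy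
    rw [hQ]
    apply Finset.sum_le_sum
    intro i _
    have : x * p i ≤ y * p i := mul_le_mul_of_nonneg_right hxy (hp i)
    exact min_le_min (max_le_max (by linarith) le_rfl) le_rfl
  -- key identity for Q μ
  have hdisj : Disjoint (Nc μ) (Nu μ) := by
    rw [Finset.disjoint_left]
    intro i h1 h2
    rw [hNc'] at h1; rw [hNu'] at h2
    linarith [h1.2]
  have key : Q μ = μ * (∑ i ∈ Nc μ, p i) - (∑ i ∈ Nc μ, β * r i / α)
      + ∑ i ∈ Nu μ, a i := by
    have h0 : ∀ i ∈ Finset.univ, i ∉ Nc μ ∪ Nu μ →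
        min (max (μ * p i - β * r i / α) 0) (a i) = 0 := by
      intro i _ hi
      rw [Finset.mem_union, hNc', hNu'] at hi
      push_neg at hi
      obtain ⟨h1, h2⟩ := hi
      have hx : μ * p i - β * r i / α ≤ 0 := by
        by_contra hc
        push_neg at hc
        linarith [h1 hc]
      rw [max_eq_right hx, min_eq_left (ha i)]
    have hstep : Q μ = ∑ i ∈ Nc μ ∪ Nu μ, min (max (μ * p i - β * r i / α) 0) (a i) := by
      rw [hQ]
      exact (Finset.sum_subset (Finset.subset_univ _) h0).symm
    rw [hstep, Finset.sum_union hdisj]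
    have h1 : ∀ i ∈ Nc μ, min (max (μ * p i - β * r i / α) 0) (a i)
        = μ * p i - β * r i / α := by
      intro i hi
      rw [hNc'] at hi
      rw [max_eq_left (le_of_lt hi.1), min_eq_left (le_of_lt hi.2)]
    have h2 : ∀ i ∈ Nu μ, min (max (μ * p i - β * r i / α) 0) (a i) = a i := by
      intro i hi
      rw [hNu'] at hi
      rw [max_eq_left (le_trans (ha i) hi), min_eq_right hi]
    rw [Finset.sum_congr rfl h1, Finset.sum_congr rfl h2, Finset.sum_sub_distrib,
      Finset.mul_sum]
  -- μ < T μ ↔ Q μ < 1, T μ < μ ↔ 1 < Q μ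
  have hTlt : μ < T μ ↔ Q μ < 1 := by
    rw [hT]
    simp only
    rw [lt_div_iff₀ hden, key]
    constructor <;> intro h <;> linarith
  have hTgt : T μ < μ ↔ 1 < Q μ := by
    rw [hT]
    simp only
    rw [div_lt_iff₀ hden, key]
    constructor <;> intro h <;> linarith
  -- comparison of Q μ with 1
  have hQlt : Q μ < 1 ↔ μ < μs := by
    constructor
    · intro h
      rcases lt_trichotomy μ μs with h' | h' | h'
      · exact h'
      · rw [h'] at h; linarith [hroot]
      · have := hmono μs μ (le_of_lt h')
        rw [hroot] at this; linarith
    · intro h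
      have h1 := hmono μ μs (le_of_lt h)
      rw [hroot] at h1
      exact lt_of_le_of_ne h1 (huniq μ hμ (ne_of_lt h))
  have hQgt : 1 < Q μ ↔ μs < μ := by
    constructor
    · intro h
      rcases lt_trichotomy μ μs with h' | h' | h'
      · have := hmono μ μs (le_of_lt h')
        rw [hroot] at this; linarith
      · rw [h'] at h; linarith [hroot]
      · exact h'
    · intro h
      have h1 := hmono μs μ (le_of_lt h)
      rw [hroot] at h1
      exact lt_of_le_of_ne h1 (Ne.symm (huniq μ hμ (ne_of_gt h)))
  exact ⟨hTlt.trans hQlt, hTgt.trans hQgt⟩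
end
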